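/- Let G ∈ F[z]^{k×n} with controller canonical form (A,B,C,D). For Laurent series u = Σ_{t≥0} u_t z^t and v = Σ_{t≥0} v_t z^t, define x = z·uB(I − zA)^{-1}. Then x_0 = 0, and v = uG if and only if x_{t+1} = x_t A + u_t B and v_t = x_t C + u_t D hold for all t ≥ 0. -/

import Mathlib

open Polynomial Matrix
open scoped Classical

/-- Embedding of polynomials into formal Laurent series. -/
noncomputable def polyToLS (F : Type*) [Field F] : Polynomial F →+* LaurentSeries F :=
  (HahnSeries.ofPowerSeries ℤ F).comp Polynomial.coeToPowerSeries.ringHom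

/-- The convolutional code generated by `G`: all `u·G` with `u` a Laurent-series row vector. -/
noncomputable def convCode {F : Type*} [Field F] {k n : ℕ}
    (G : Matrix (Fin k) (Fin n) (Polynomial F)) : Set (Fin n → LaurentSeries F) :=
  {v | ∃ u : Fin k → LaurentSeries F, v = Matrix.vecMul u (G.map (polyToLS F))}

/-- `G` is basic: it has a polynomial right inverse. -/
def IsBasic {F : Type*} [Field F] {k n : ℕ} (G : Matrix (Fin k) (Fin n) (Polynomial F)) : Prop :=
  ∃ H : Matrix (Fin n) (Fin k) (Polynomial F), G * H = 1

/-- The overall constraint length: maximal degree of a (full-size) `k`-minor of `G`. -/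
noncomputable def ocl {F : Type*} [Field F] {k n : ℕ}
    (G : Matrix (Fin k) (Fin n) (Polynomial F)) : ℕ :=
  Finset.univ.sup fun f : Fin k ↪ Fin n => ((G.submatrix id f).det).natDegree

/-- The degree of the `i`-th row of `G` (in `WithBot ℕ`, so `deg 0 = ⊥`). -/
noncomputable def rowDeg {F : Type*} [Field F] {k n : ℕ}
    (G : Matrix (Fin k) (Fin n) (Polynomial F)) (i : Fin k) : WithBot ℕ :=
  Finset.univ.sup fun j => (G i j).degree

/-- The state-index set of the controller canonical form for row degrees `γ`. -/
abbrev StateIdx {k : ℕ} (γ : Fin k → ℕ) := Σ i : Fin k, Fin (γ i)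

/-- State matrix `A` of the controller canonical form (block diagonal nilpotent shifts). -/
def ccfA (F : Type*) [Field F] {k : ℕ} (γ : Fin k → ℕ) :
    Matrix (StateIdx γ) (StateIdx γ) F :=
  fun s t => if s.1 = t.1 ∧ (t.2 : ℕ) = (s.2 : ℕ) + 1 then 1 else 0

/-- Input matrix `B` of the controller canonical form. -/
def ccfB (F : Type*) [Field F] {k : ℕ} (γ : Fin k → ℕ) :
    Matrix (Fin k) (StateIdx γ) F :=
  fun i s => if s.1 = i ∧ (s.2 : ℕ) = 0 then 1 else 0

/-- Output matrix `C` of the controller canonical form: higher coefficient rows of `G`. -/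
noncomputable def ccfC {F : Type*} [Field F] {k n : ℕ} (γ : Fin k → ℕ)
    (G : Matrix (Fin k) (Fin n) (Polynomial F)) : Matrix (StateIdx γ) (Fin n) F :=
  fun s j => (G s.1 j).coeff ((s.2 : ℕ) + 1)

/-- Feedthrough matrix `D`: the constant coefficient matrix of `G`. -/
noncomputable def ccfD {F : Type*} [Field F] {k n : ℕ}
    (G : Matrix (Fin k) (Fin n) (Polynomial F)) : Matrix (Fin k) (Fin n) F :=
  fun i j => (G i j).coeff 0

/-- Hamming weight of a vector. -/
noncomputable def hamWt {F : Type*} [Field F] {ι : Type*} (v : ι → F) : ℕ :=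
  Nat.card {j : ι // v j ≠ 0}


set_option synthInstance.maxHeartbeats 1000000
set_option maxHeartbeats 1000000

section Aux

variable {F : Type*} [Field F] {k n : ℕ}

lemma polyToLS_C (a : F) : polyToLS F (Polynomial.C a) = HahnSeries.C a := by
  simp [polyToLS]

lemma polyToLS_X : polyToLS F Polynomial.X = HahnSeries.single (1:ℤ) (1:F) := by
  simp [polyToLS]

/-- series with nonnegative support -/
def NN (f : LaurentSeries F) : Prop := ∀ t : ℤ, t < 0 → f.coeff t = 0

lemma NN_polyToLS (p : Polynomial F) : NN (polyToLS F p) := by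
  intro t ht
  have : (polyToLS F p) = HahnSeries.embDomain
      ⟨⟨((↑) : ℕ → ℤ), Nat.strictMono_cast.injective⟩, by
        simp only [Function.Embedding.coeFn_mk]; exact Nat.cast_le⟩
      (HahnSeries.toPowerSeries.symm (p : PowerSeries F)) := rfl
  rw [this, HahnSeries.embDomain_notin_range]
  rintro ⟨m, hm⟩
  simp at hm
  omega

lemma NN_single {a : ℤ} (ha : 0 ≤ a) (r : F) : NN (HahnSeries.single a r) := by
  intro t ht
  rw [HahnSeries.coeff_single, if_neg (by omega)]

lemma NN_mul {f g : LaurentSeries F} (hf : NN f) (hg : NN g) : NN (f * g) := by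
  intro t ht
  rw [HahnSeries.coeff_mul]
  apply Finset.sum_eq_zero
  intro ij hij
  rw [Finset.mem_addAntidiagonal] at hij
  obtain ⟨h1, h2, h3⟩ := hij
  rcases lt_or_ge ij.1 0 with h | h
  · rw [hf _ h, zero_mul]
  · have : ij.2 < 0 := by omega
    rw [hg _ this, mul_zero]

lemma NN_sum {ι : Type*} (s : Finset ι) (f : ι → LaurentSeries F) (h : ∀ i ∈ s, NN (f i)) :
    NN (∑ i ∈ s, f i) := by
  intro t ht
  rw [show ((∑ i ∈ s, f i).coeff t) = (HahnSeries.coeff.addMonoidHom t) (∑ i ∈ s, f i) from rfl,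
    map_sum]
  exact Finset.sum_eq_zero fun i hi => h i hi t ht

lemma coeff_sum {ι : Type*} (s : Finset ι) (f : ι → LaurentSeries F) (t : ℤ) :
    (∑ i ∈ s, f i).coeff t = ∑ i ∈ s, (f i).coeff t :=
  map_sum (HahnSeries.coeff.addMonoidHom t) f s

lemma coeff_z_mul (f : LaurentSeries F) (t : ℤ) :
    ((HahnSeries.single (1:ℤ) (1:F)) * f).coeff t = f.coeff (t-1) := by
  have := HahnSeries.coeff_single_mul_add (r := (1:F)) (x := f) (b := (1:ℤ)) (a := t - 1)
  rw [show (t-1) + (1:ℤ) = t by ring] at this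
  rw [this, one_mul]

lemma coeff_mul_C (f : LaurentSeries F) (a : F) (t : ℤ) :
    (f * HahnSeries.C a).coeff t = f.coeff t * a :=
  HahnSeries.coeff_mul_single_zero

lemma sigma_eq {γ : Fin k → ℕ} {r r' : StateIdx γ} (h1 : r.1 = r'.1) (h2 : (r.2 : ℕ) = (r'.2 : ℕ)) :
    r = r' := by
  rcases r with ⟨i, a⟩; rcases r' with ⟨i', a'⟩
  cases h1
  congr 1
  exact Fin.ext h2

lemma Apow_entry (γ : Fin k → ℕ) (p : ℕ) (s t : StateIdx γ) :
    ((ccfA F γ) ^ p) s t = if s.1 = t.1 ∧ (t.2 : ℕ) = (s.2 : ℕ) + p then 1 else 0 := by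
  induction p generalizing t with
  | zero =>
    simp only [pow_zero, Matrix.one_apply, add_zero]
    by_cases h : s = t
    · subst h; rw [if_pos rfl, if_pos ⟨rfl, rfl⟩]
    · rw [if_neg h, if_neg]
      rintro ⟨h1, h2⟩
      exact h (sigma_eq h1 h2.symm)
  | succ p ih =>
    rw [pow_succ, Matrix.mul_apply]
    by_cases h : s.1 = t.1 ∧ (t.2 : ℕ) = (s.2 : ℕ) + (p + 1)
    · obtain ⟨h1, h2⟩ := h
      have hγ : γ s.1 = γ t.1 := congrArg γ h1
      have hlt : (s.2 : ℕ) + p < γ s.1 := by have := t.2.isLt; omega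
      rw [Finset.sum_eq_single (⟨s.1, ⟨(s.2 : ℕ) + p, hlt⟩⟩ : StateIdx γ)]
      · rw [ih, ccfA]
        dsimp only
        rw [if_pos (show s.1 = s.1 ∧ (s.2 : ℕ) + p = (s.2 : ℕ) + p from ⟨rfl, rfl⟩), one_mul,
          if_pos (show s.1 = t.1 ∧ (t.2 : ℕ) = (s.2 : ℕ) + p + 1 from ⟨h1, by omega⟩),
          if_pos ⟨h1, h2⟩]
      · intro r _ hr
        rw [ih]
        by_cases h3 : s.1 = r.1 ∧ (r.2 : ℕ) = (s.2 : ℕ) + p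
        · exact absurd (sigma_eq (r' := ⟨s.1, ⟨(s.2 : ℕ) + p, hlt⟩⟩) h3.1.symm h3.2) hr
        · rw [if_neg h3, zero_mul]
      · intro h'; exact absurd (Finset.mem_univ _) h'
    · rw [if_neg h]
      apply Finset.sum_eq_zero
      intro r _
      rw [ih, ccfA]
      by_cases h3 : s.1 = r.1 ∧ (r.2 : ℕ) = (s.2 : ℕ) + p
      · rw [if_pos h3, one_mul, if_neg]
        rintro ⟨h4, h5⟩
        exact h ⟨h3.1.trans h4, by omega⟩
      · rw [if_neg h3, zero_mul]

lemma Apow_eq_zero (γ : Fin k → ℕ) {p : ℕ} (hp : ∀ i, γ i ≤ p) : (ccfA F γ) ^ p = 0 := by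
  ext s t
  rw [Apow_entry, if_neg, Matrix.zero_apply]
  rintro ⟨h1, h2⟩
  have := t.2.isLt
  have := hp t.1
  omega

lemma BApow_entry (γ : Fin k → ℕ) (p : ℕ) (i : Fin k) (t : StateIdx γ) :
    (ccfB F γ * (ccfA F γ) ^ p) i t = if t.1 = i ∧ (t.2 : ℕ) = p then 1 else 0 := by
  rw [Matrix.mul_apply]
  by_cases h : t.1 = i ∧ (t.2 : ℕ) = p
  · obtain ⟨h1, h2⟩ := h
    have hγ : γ t.1 = γ i := congrArg γ h1
    have hpos : 0 < γ i := by have := t.2.isLt; omega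
    rw [Finset.sum_eq_single (⟨i, ⟨0, hpos⟩⟩ : StateIdx γ)]
    · rw [Apow_entry, ccfB]
      dsimp only
      rw [if_pos (show (i : Fin k) = i ∧ (0 : ℕ) = 0 from ⟨rfl, rfl⟩), one_mul,
        if_pos (show (i : Fin k) = t.1 ∧ (t.2 : ℕ) = 0 + p from ⟨h1.symm, by omega⟩),
        if_pos ⟨h1, h2⟩]
    · intro r _ hr
      rw [ccfB]
      by_cases h3 : r.1 = i ∧ (r.2 : ℕ) = 0
      · exact absurd (sigma_eq (r' := ⟨i, ⟨0, hpos⟩⟩) h3.1 h3.2) hr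
      · rw [if_neg h3, zero_mul]
    · intro h'; exact absurd (Finset.mem_univ _) h'
  · rw [if_neg h]
    apply Finset.sum_eq_zero
    intro r _
    rw [ccfB, Apow_entry]
    by_cases h3 : r.1 = i ∧ (r.2 : ℕ) = 0
    · rw [if_pos h3, one_mul, if_neg]
      rintro ⟨h4, h5⟩
      exact h ⟨h4.symm.trans h3.1, by omega⟩
    · rw [if_neg h3, zero_mul]

lemma BApowC_entry (γ : Fin k → ℕ) (G : Matrix (Fin k) (Fin n) (Polynomial F))
    (p : ℕ) (i : Fin k) (j : Fin n) :
    (ccfB F γ * (ccfA F γ) ^ p * ccfC γ G) i j =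
      if p < γ i then (G i j).coeff (p + 1) else 0 := by
  rw [Matrix.mul_apply]
  by_cases h : p < γ i
  · rw [Finset.sum_eq_single (⟨i, ⟨p, h⟩⟩ : StateIdx γ)]
    · rw [BApow_entry, ccfC]
      dsimp only
      rw [if_pos (show (i : Fin k) = i ∧ p = p from ⟨rfl, rfl⟩), one_mul, if_pos h]
    · intro r _ hr
      rw [BApow_entry]
      by_cases h3 : r.1 = i ∧ (r.2 : ℕ) = p
      · exact absurd (sigma_eq (r' := ⟨i, ⟨p, h⟩⟩) h3.1 h3.2) hr
      · rw [if_neg h3, zero_mul]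
    · intro h'; exact absurd (Finset.mem_univ _) h'
  · rw [if_neg h]
    apply Finset.sum_eq_zero
    intro r _
    rw [BApow_entry]
    by_cases h3 : r.1 = i ∧ (r.2 : ℕ) = p
    · exfalso
      have := r.2.isLt
      have hγ : γ r.1 = γ i := congrArg γ h3.1
      omega
    · rw [if_neg h3, zero_mul]

section LS
variable {γ : Fin k → ℕ}

local notation "z" => (HahnSeries.single (1:ℤ) (1:F) : LaurentSeries F)
local notation "φ" => (HahnSeries.C : F →+* LaurentSeries F)

noncomputable def Nmat (γ : Fin k → ℕ) (m : ℕ) : Matrix (StateIdx γ) (StateIdx γ) (LaurentSeries F) :=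
  ∑ p ∈ Finset.range m, (z ^ p) • ((ccfA F γ) ^ p).map φ

lemma MN_eq_one (m : ℕ) (hm : ∀ i, γ i ≤ m) :
    (1 - z • (ccfA F γ).map φ) * Nmat γ m = 1 := by
  set f : ℕ → Matrix (StateIdx γ) (StateIdx γ) (LaurentSeries F) :=
    fun p => (z ^ p) • ((ccfA F γ) ^ p).map φ with hf
  have step : (z • (ccfA F γ).map φ) * Nmat γ m = ∑ p ∈ Finset.range m, f (p + 1) := by
    rw [Nmat, Finset.mul_sum]
    refine Finset.sum_congr rfl fun p _ => ?_
    show (z • (ccfA F γ).map φ) * ((z ^ p) • ((ccfA F γ) ^ p).map φ)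
        = z ^ (p+1) • ((ccfA F γ) ^ (p+1)).map φ
    rw [Matrix.smul_mul z ((ccfA F γ).map φ) ((z ^ p) • ((ccfA F γ) ^ p).map φ),
      Matrix.mul_smul ((ccfA F γ).map φ) (z ^ p) (((ccfA F γ) ^ p).map φ),
      smul_smul z (z ^ p) ((ccfA F γ).map φ * ((ccfA F γ) ^ p).map φ),
      ← pow_succ', ← Matrix.map_mul, ← pow_succ']
  rw [Matrix.sub_mul, Matrix.one_mul, step, Nmat, ← hf, ← Finset.sum_sub_distrib,
    Finset.sum_range_sub' f m]
  have h0 : f 0 = 1 := by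
    rw [hf]
    simp only [pow_zero, one_smul]
    rw [Matrix.map_one _ (map_zero φ) (map_one φ)]
  have hm' : f m = 0 := by
    rw [hf]
    simp only [Apow_eq_zero γ hm, Matrix.map_zero _ (map_zero φ), smul_zero]
  rw [h0, hm', sub_zero]

lemma BN_sum (m : ℕ) :
    (ccfB F γ).map φ * Nmat (F := F) γ m
      = ∑ p ∈ Finset.range m, (z ^ p) • ((ccfB F γ * (ccfA F γ) ^ p).map φ) := by
  rw [Nmat, Matrix.mul_sum]
  refine Finset.sum_congr rfl fun p _ => ?_
  rw [Matrix.mul_smul ((ccfB F γ).map φ) (z ^ p) (((ccfA F γ) ^ p).map φ), ← Matrix.map_mul]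

lemma BNC_sum (G : Matrix (Fin k) (Fin n) (Polynomial F)) (m : ℕ) :
    (ccfB F γ).map φ * Nmat (F := F) γ m * (ccfC γ G).map φ
      = ∑ p ∈ Finset.range m, (z ^ p) • ((ccfB F γ * (ccfA F γ) ^ p * ccfC γ G).map φ) := by
  rw [BN_sum, Matrix.sum_mul]
  refine Finset.sum_congr rfl fun p _ => ?_
  rw [Matrix.smul_mul (z ^ p) ((ccfB F γ * (ccfA F γ) ^ p).map φ) ((ccfC γ G).map φ),
    ← Matrix.map_mul]

lemma zpow_single (p : ℕ) : (z ^ p : LaurentSeries F) = HahnSeries.single (p : ℤ) 1 := by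
  rw [HahnSeries.single_pow, one_pow, nsmul_eq_mul, mul_one]

lemma G_decomp (G : Matrix (Fin k) (Fin n) (Polynomial F))
    (hγ : ∀ i, rowDeg G i = (γ i : WithBot ℕ)) (m : ℕ) (hm : ∀ i, γ i ≤ m) :
    G.map ⇑(polyToLS F)
      = (ccfD G).map φ + z • ((ccfB F γ).map φ * Nmat (F := F) γ m * (ccfC γ G).map φ) := by
  refine Matrix.ext fun i j => ?_
  have hdeg : (G i j).degree ≤ (γ i : WithBot ℕ) := by
    rw [← hγ i, rowDeg]
    exact Finset.le_sup (f := fun j => (G i j).degree) (Finset.mem_univ j)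
  rw [Matrix.map_apply, Matrix.add_apply, Matrix.smul_apply, BNC_sum, Matrix.sum_apply,
    Matrix.map_apply, ccfD]
  have hcoeffif : ∀ p : ℕ, (if p < γ i then (G i j).coeff (p + 1) else 0) = (G i j).coeff (p + 1) := by
    intro p
    split_ifs with hp
    · rfl
    · symm
      apply Polynomial.coeff_eq_zero_of_degree_lt
      refine lt_of_le_of_lt hdeg ?_
      have hgle : γ i < p + 1 := by omega
      exact_mod_cast hgle
  have hsum : ∀ p ∈ Finset.range m,
      ((z ^ p) • ((ccfB F γ * (ccfA F γ) ^ p * ccfC γ G).map φ)) i j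
        = z ^ p * φ ((G i j).coeff (p + 1)) := by
    intro p _
    rw [Matrix.smul_apply, Matrix.map_apply, BApowC_entry, hcoeffif p, smul_eq_mul]
  rw [Finset.sum_congr rfl hsum]
  have hnd : (G i j).natDegree < m + 1 := by
    rcases eq_or_ne (G i j) 0 with h0 | h0
    · rw [h0, Polynomial.natDegree_zero]; omega
    · have := Polynomial.natDegree_le_iff_degree_le.mpr (hdeg.trans (by exact_mod_cast hm i))
      omega
  conv_lhs => rw [Polynomial.as_sum_range' (G i j) (m + 1) hnd]
  rw [map_sum]
  have hterm : ∀ q ∈ Finset.range (m + 1),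
      polyToLS F ((Polynomial.monomial q) ((G i j).coeff q))
        = φ ((G i j).coeff q) * z ^ q := by
    intro q _
    rw [← Polynomial.C_mul_X_pow_eq_monomial, _root_.map_mul, _root_.map_pow, polyToLS_C,
      polyToLS_X]
  rw [Finset.sum_congr rfl hterm, Finset.sum_range_succ']
  rw [smul_eq_mul, Finset.mul_sum]
  rw [pow_zero, mul_one, add_comm]
  congr 1
  refine Finset.sum_congr rfl fun p _ => ?_
  ring

end LS
end Aux

section Main
variable {F : Type*} [Field F] {k n : ℕ}

local notation "z" => (HahnSeries.single (1:ℤ) (1:F) : LaurentSeries F)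
local notation "φ" => (HahnSeries.C : F →+* LaurentSeries F)

lemma coeff_vecMul_map {α β : Type*} [Fintype α] (y : α → LaurentSeries F) (M : Matrix α β F)
    (τ : ℤ) (j : β) :
    ((Matrix.vecMul y (M.map φ)) j).coeff τ
      = Matrix.vecMul (fun r => (y r).coeff τ) M j := by
  show ((∑ i, y i * (M.map φ) i j).coeff τ) = ∑ i, (y i).coeff τ * M i j
  rw [_root_.coeff_sum]
  refine Finset.sum_congr rfl fun i _ => ?_
  rw [Matrix.map_apply, _root_.coeff_mul_C]

lemma vecMul_smulMat {α β : Type*} [Fintype α] (c : LaurentSeries F) (y : α → LaurentSeries F)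
    (M : Matrix α β (LaurentSeries F)) :
    Matrix.vecMul y (c • M) = c • Matrix.vecMul y M := by
  funext j
  show (∑ i, y i * (c • M) i j) = c * ∑ i, y i * M i j
  rw [Finset.mul_sum]
  refine Finset.sum_congr rfl fun i _ => ?_
  rw [Matrix.smul_apply, smul_eq_mul]
  ring

lemma smul_vecMul' {α β : Type*} [Fintype α] (c : LaurentSeries F) (y : α → LaurentSeries F)
    (M : Matrix α β (LaurentSeries F)) :
    Matrix.vecMul (c • y) M = c • Matrix.vecMul y M := by
  funext j
  show (∑ i, (c • y) i * M i j) = c * ∑ i, y i * M i j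
  rw [Finset.mul_sum]
  refine Finset.sum_congr rfl fun i _ => ?_
  rw [Pi.smul_apply, smul_eq_mul]
  ring

theorem stmt6' {γ : Fin k → ℕ}
    (G : Matrix (Fin k) (Fin n) (Polynomial F))
    (hγ : ∀ i, rowDeg G i = (γ i : WithBot ℕ))
    (u : Fin k → LaurentSeries F) (v : Fin n → LaurentSeries F)
    (hu : ∀ i, ∀ t : ℤ, t < 0 → (u i).coeff t = 0)
    (hv : ∀ j, ∀ t : ℤ, t < 0 → (v j).coeff t = 0)
    (x : StateIdx γ → LaurentSeries F)
    (hx : x = (polyToLS F Polynomial.X) •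
      Matrix.vecMul u ((ccfB F γ).map (fun a => polyToLS F (Polynomial.C a)) *
        (1 - (polyToLS F Polynomial.X) •
          (ccfA F γ).map (fun a => polyToLS F (Polynomial.C a)))⁻¹)) :
    (∀ s, (x s).coeff 0 = 0) ∧
    ((v = Matrix.vecMul u (G.map (polyToLS F))) ↔
      (∀ t : ℤ, 0 ≤ t →
        ((fun s => (x s).coeff (t + 1)) =
          Matrix.vecMul (fun s => (x s).coeff t) (ccfA F γ) +
            Matrix.vecMul (fun i => (u i).coeff t) (ccfB F γ)) ∧
        ((fun j => (v j).coeff t) =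
          Matrix.vecMul (fun s => (x s).coeff t) (ccfC γ G) +
            Matrix.vecMul (fun i => (u i).coeff t) (ccfD G)))) := by
  have hφ : (fun a : F => polyToLS F (Polynomial.C a)) = ⇑φ := funext polyToLS_C
  set m := Finset.univ.sup γ with hmdef
  have hm : ∀ i, γ i ≤ m := fun i => Finset.le_sup (Finset.mem_univ i)
  rw [hφ, polyToLS_X, Matrix.inv_eq_right_inv (MN_eq_one m hm)] at hx
  set P : Matrix (Fin k) (StateIdx γ) (LaurentSeries F) := (ccfB F γ).map ⇑φ * Nmat (F := F) γ m with hP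
  -- hx : x = z • vecMul u P
  have hNNP : ∀ i s, NN (P i s) := by
    intro i s
    rw [hP, BN_sum, Matrix.sum_apply]
    apply NN_sum
    intro p _
    rw [Matrix.smul_apply, smul_eq_mul, Matrix.map_apply]
    refine NN_mul ?_ ?_
    · rw [zpow_single]
      exact NN_single (Int.natCast_nonneg p) _
    · rw [HahnSeries.C_apply]
      exact NN_single le_rfl _
  have hx0 : ∀ s, ∀ t : ℤ, t ≤ 0 → (x s).coeff t = 0 := by
    intro s t ht
    have hxs : x s = z * (Matrix.vecMul u P) s := by
      conv_lhs => rw [hx]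
      rw [Pi.smul_apply, smul_eq_mul]
    rw [hxs, coeff_z_mul]
    have e : Matrix.vecMul u P s = ∑ i, u i * P i s := rfl
    rw [e]
    exact NN_sum Finset.univ (fun i => u i * P i s)
      (fun i _ => NN_mul (hu i) (hNNP i s)) (t - 1) (by omega)
  have hMN := MN_eq_one (F := F) (γ := γ) m hm
  have hNM : Nmat γ m * (1 - z • (ccfA F γ).map ⇑φ) = 1 := mul_eq_one_comm.mp hMN
  have hxM : Matrix.vecMul x (1 - z • (ccfA F γ).map ⇑φ)
      = z • Matrix.vecMul u ((ccfB F γ).map ⇑φ) := by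
    rw [hx, smul_vecMul', Matrix.vecMul_vecMul, Matrix.mul_assoc, hNM, Matrix.mul_one]
  have hxeq : x = z • (Matrix.vecMul x ((ccfA F γ).map ⇑φ)
      + Matrix.vecMul u ((ccfB F γ).map ⇑φ)) := by
    rw [Matrix.vecMul_sub, Matrix.vecMul_one, vecMul_smulMat] at hxM
    rw [smul_add, ← hxM]
    abel
  have hrec : ∀ t : ℤ, (fun s => (x s).coeff (t + 1))
      = Matrix.vecMul (fun s => (x s).coeff t) (ccfA F γ)
        + Matrix.vecMul (fun i => (u i).coeff t) (ccfB F γ) := by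
    intro t
    funext s
    have hxs : x s = z * ((Matrix.vecMul x ((ccfA F γ).map ⇑φ)
        + Matrix.vecMul u ((ccfB F γ).map ⇑φ)) s) := by
      conv_lhs => rw [hxeq]
      rw [Pi.smul_apply, smul_eq_mul]
    rw [hxs, coeff_z_mul, show t + 1 - 1 = t by ring, Pi.add_apply, HahnSeries.coeff_add,
      coeff_vecMul_map, coeff_vecMul_map]
    rfl
  have hout : Matrix.vecMul u (G.map ⇑(polyToLS F))
      = Matrix.vecMul x ((ccfC γ G).map ⇑φ) + Matrix.vecMul u ((ccfD G).map ⇑φ) := by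
    rw [G_decomp G hγ m hm, Matrix.vecMul_add, vecMul_smulMat, ← Matrix.vecMul_vecMul,
      ← smul_vecMul', ← hx, add_comm]
  have hcoefG : ∀ t : ℤ, (fun j => ((Matrix.vecMul u (G.map ⇑(polyToLS F))) j).coeff t)
      = Matrix.vecMul (fun s => (x s).coeff t) (ccfC γ G)
        + Matrix.vecMul (fun i => (u i).coeff t) (ccfD G) := by
    intro t
    funext j
    rw [show (Matrix.vecMul u (G.map ⇑(polyToLS F))) j
        = (Matrix.vecMul x ((ccfC γ G).map ⇑φ) + Matrix.vecMul u ((ccfD G).map ⇑φ)) j from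
      congrFun hout j, Pi.add_apply, HahnSeries.coeff_add, coeff_vecMul_map, coeff_vecMul_map]
    rfl
  have hNNuG : ∀ j, NN ((Matrix.vecMul u (G.map ⇑(polyToLS F))) j) := fun j =>
    NN_sum Finset.univ (fun i => u i * (G.map ⇑(polyToLS F)) i j)
      (fun i _ => NN_mul (hu i) (by rw [Matrix.map_apply]; exact NN_polyToLS _))
  refine ⟨fun s => hx0 s 0 le_rfl, ?_, ?_⟩
  · intro hveq t _
    refine ⟨hrec t, ?_⟩
    rw [hveq]
    exact hcoefG t
  · intro h
    funext j
    apply HahnSeries.coeff_injective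
    funext t
    rcases lt_or_ge t 0 with ht | ht
    · rw [hv j t ht, hNNuG j t ht]
    · have h2 := congrFun (h t ht).2 j
      rw [h2, ← congrFun (hcoefG t) j]
end Main

theorem stmt6 {F : Type*} [Field F] {k n : ℕ}
    (G : Matrix (Fin k) (Fin n) (Polynomial F)) (γ : Fin k → ℕ)
    (hγ : ∀ i, rowDeg G i = (γ i : WithBot ℕ))
    (u : Fin k → LaurentSeries F) (v : Fin n → LaurentSeries F)
    (hu : ∀ i, ∀ t : ℤ, t < 0 → (u i).coeff t = 0)
    (hv : ∀ j, ∀ t : ℤ, t < 0 → (v j).coeff t = 0)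
    (x : StateIdx γ → LaurentSeries F)
    (hx : x = (polyToLS F Polynomial.X) •
      Matrix.vecMul u ((ccfB F γ).map (fun a => polyToLS F (Polynomial.C a)) *
        (1 - (polyToLS F Polynomial.X) •
          (ccfA F γ).map (fun a => polyToLS F (Polynomial.C a)))⁻¹)) :
    (∀ s, (x s).coeff 0 = 0) ∧
    ((v = Matrix.vecMul u (G.map (polyToLS F))) ↔
      (∀ t : ℤ, 0 ≤ t →
        ((fun s => (x s).coeff (t + 1)) =
          Matrix.vecMul (fun s => (x s).coeff t) (ccfA F γ) +
            Matrix.vecMul (fun i => (u i).coeff t) (ccfB F γ)) ∧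
        ((fun j => (v j).coeff t) =
          Matrix.vecMul (fun s => (x s).coeff t) (ccfC γ G) +
            Matrix.vecMul (fun i => (u i).coeff t) (ccfD G)))) :=
  stmt6' (γ := γ) G hγ u v hu hv x hx
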